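/- arXiv:2405.03079 — 2 statements merged into one kernel-verified Lean document; each statement's English description precedes it below -/
import Mathlib

section
/- The sum of the areas under all Dyck paths from (0,0) to (2n,0) equals -(2n+1)·C(n) + 4^n, where C(n) = (2n)!/(n!(n+1)!) is the n-th Catalan number. -/
open Finset

/-- Step of a Dyck path: `true` is an up-step (+1), `false` a down-step (-1). -/
def dstep (b : Bool) : ℤ := if b then 1 else -1

/-- Height of the path after the first `k` steps. -/
def dheight {m : ℕ} (f : Fin m → Bool) (k : ℕ) : ℤ :=
  ∑ i ∈ Finset.univ.filter (fun i : Fin m => (i : ℕ) < k), dstep (f i)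

/-- A Dyck path: ends at height 0 and never goes below the x-axis. -/
def IsDyck {m : ℕ} (f : Fin m → Bool) : Prop :=
  dheight f m = 0 ∧ ∀ k ∈ Finset.range m, 0 ≤ dheight f k

instance {m : ℕ} : DecidablePred (@IsDyck m) := fun f => by
  unfold IsDyck; infer_instance

/-- Area under the path: sum of the heights (trapezoid areas telescope to this). -/
def darea {m : ℕ} (f : Fin m → Bool) : ℤ := ∑ k ∈ Finset.range m, dheight f k

/-- Sum of the `r`-th powers of the areas under all Dyck paths from (0,0) to (2n,0). -/
def dyckPowerSum (n r : ℕ) : ℚ :=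
  ∑ f ∈ Finset.univ.filter (fun f : Fin (2*n) → Bool => IsDyck f), (darea f : ℚ) ^ r

/-- The Catalan number `(2n)!/(n!(n+1)!)`. -/
def cat (n : ℕ) : ℚ :=
  (Nat.factorial (2*n) : ℚ) / ((Nat.factorial n : ℚ) * (Nat.factorial (n+1) : ℚ))

namespace DyckAux



lemma dheight_eq_ite {m : ℕ} (f : Fin m → Bool) (k : ℕ) :
    dheight f k = ∑ i : Fin m, if (i : ℕ) < k then dstep (f i) else 0 := by
  rw [dheight, Finset.sum_filter]

lemma dheight_castSucc {m : ℕ} (f : Fin (m+1) → Bool) (k : ℕ) (hk : k ≤ m) :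
    dheight f k = dheight (fun i : Fin m => f i.castSucc) k := by
  rw [dheight_eq_ite, dheight_eq_ite, Fin.sum_univ_castSucc]
  simp only [Fin.coe_castSucc, Fin.val_last]
  rw [if_neg (by omega)]
  ring

lemma dheight_snoc {m : ℕ} (g : Fin m → Bool) (b : Bool) (k : ℕ) (hk : k ≤ m) :
    dheight (Fin.snoc g b) k = dheight g k := by
  rw [dheight_castSucc _ k hk]
  congr 1
  funext i
  simp [Fin.snoc_castSucc]

lemma dheight_last {m : ℕ} (f : Fin (m+1) → Bool) :
    dheight f (m+1) = dheight f m + dstep (f (Fin.last m)) := by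
  rw [dheight_eq_ite, Fin.sum_univ_castSucc,
    dheight_castSucc f m le_rfl, dheight_eq_ite]
  simp [Fin.is_lt, Nat.lt_succ_iff, Fin.is_le]

lemma dheight_le {m : ℕ} (f : Fin m → Bool) (k : ℕ) : dheight f k ≤ m := by
  calc dheight f k ≤ ∑ i ∈ Finset.univ.filter (fun i : Fin m => (i : ℕ) < k), 1 := by
        apply Finset.sum_le_sum
        intro i _
        cases f i <;> simp [dstep]
    _ ≤ (m : ℤ) := by
        rw [Finset.sum_const, nsmul_eq_mul, mul_one]
        exact_mod_cast (Finset.card_filter_le _ _).trans (by simp)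





def okPred {m : ℕ} (h : ℤ) (f : Fin m → Bool) : Prop :=
  (∀ k ∈ Finset.range (m+1), 0 ≤ dheight f k) ∧ dheight f m = h

instance {m : ℕ} (h : ℤ) : DecidablePred (@okPred m h) := fun f => by
  unfold okPred; infer_instance

def okSet (m : ℕ) (h : ℤ) : Finset (Fin m → Bool) := univ.filter (okPred h)

def NW (m : ℕ) (h : ℤ) : ℚ := (okSet m h).card
def SW (m : ℕ) (h : ℤ) : ℚ := ∑ f ∈ okSet m h, ∑ k ∈ Finset.range (m+1), ((dheight f k : ℤ) : ℚ)

lemma okSet_neg {m : ℕ} {h : ℤ} (hh : h < 0) : okSet m h = ∅ := by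
  ext f
  simp only [okSet, mem_filter, mem_univ, true_and, notMem_empty, iff_false, okPred]
  rintro ⟨h1, h2⟩
  have := h1 m (by simp)
  omega

lemma okSet_big {m : ℕ} {h : ℤ} (hh : (m : ℤ) < h) : okSet m h = ∅ := by
  ext f
  simp only [okSet, mem_filter, mem_univ, true_and, notMem_empty, iff_false, okPred]
  rintro ⟨h1, h2⟩
  have := dheight_le f m
  omega

lemma NW_neg {m : ℕ} {h : ℤ} (hh : h < 0) : NW m h = 0 := by simp [NW, okSet_neg hh]
lemma SW_neg {m : ℕ} {h : ℤ} (hh : h < 0) : SW m h = 0 := by simp [SW, okSet_neg hh]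
lemma NW_big {m : ℕ} {h : ℤ} (hh : (m : ℤ) < h) : NW m h = 0 := by simp [NW, okSet_big hh]
lemma SW_big {m : ℕ} {h : ℤ} (hh : (m : ℤ) < h) : SW m h = 0 := by simp [SW, okSet_big hh]

lemma dheight_zero {m : ℕ} (f : Fin m → Bool) : dheight f 0 = 0 := by
  simp [dheight]

lemma NW_zero (h : ℤ) : NW 0 h = if h = 0 then 1 else 0 := by
  rcases eq_or_ne h 0 with rfl | hne
  · rw [if_pos rfl]
    have : okSet 0 0 = univ := by
      ext f
      simp [okSet, okPred, dheight_zero]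
    simp [NW, this]
  · rw [if_neg hne]
    have : okSet 0 h = ∅ := by
      ext f
      simp only [okSet, mem_filter, mem_univ, true_and, notMem_empty, iff_false, okPred]
      rintro ⟨-, h2⟩
      rw [dheight_zero] at h2
      exact hne h2.symm
    simp [NW, this]

lemma SW_zero (h : ℤ) : SW 0 h = 0 := by
  apply Finset.sum_eq_zero
  intro f _
  simp [dheight_zero]

/-- the snoc equivalence -/
def snocEquiv (m : ℕ) : ((Fin m → Bool) × Bool) ≃ (Fin (m+1) → Bool) where
  toFun p := Fin.snoc p.1 p.2
  invFun f := (fun i => f i.castSucc, f (Fin.last m))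
  left_inv p := by simp
  right_inv f := by
    funext i
    induction i using Fin.lastCases <;> simp

lemma mem_okSet_succ {m : ℕ} {h : ℤ} (hh : 0 ≤ h) (g : Fin m → Bool) (b : Bool) :
    okPred (m := m+1) h (Fin.snoc g b) ↔ okPred (m := m) (h - dstep b) g := by
  constructor
  · rintro ⟨h1, h2⟩
    rw [dheight_last, Fin.snoc_last] at h2
    constructor
    · intro k hk
      have hk' : k ≤ m := by simpa [Nat.lt_succ_iff] using hk
      have := h1 k (by simp; omega)
      rwa [dheight_snoc g b k hk'] at this
    · rw [dheight_snoc g b m le_rfl] at h2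
      omega
  · rintro ⟨h1, h2⟩
    constructor
    · intro k hk
      have hk' : k ≤ m + 1 := by simpa [Nat.lt_succ_iff] using hk
      rcases Nat.lt_or_ge k (m+1) with hlt | hge
      · have hk'' : k ≤ m := by omega
        rw [dheight_snoc g b k hk'']
        exact h1 k (by simp; omega)
      · have : k = m + 1 := by omega
        subst this
        rw [dheight_last, Fin.snoc_last, dheight_snoc g b m le_rfl]
        omega
    · rw [dheight_last, Fin.snoc_last, dheight_snoc g b m le_rfl]
      omega

lemma sum_okSet_succ {m : ℕ} {h : ℤ} (hh : 0 ≤ h) (F : (Fin (m+1) → Bool) → ℚ) :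
    ∑ f ∈ okSet (m+1) h, F f =
      (∑ g ∈ okSet m (h-1), F (Fin.snoc g true)) +
      (∑ g ∈ okSet m (h+1), F (Fin.snoc g false)) := by
  have key : ∀ (h' : ℤ) (b : Bool), ∑ g ∈ okSet m h', F (Fin.snoc g b) =
      ∑ g : Fin m → Bool, if okPred h' g then F (Fin.snoc g b) else 0 := by
    intro h' b
    rw [okSet, Finset.sum_filter]
  have e1 : ∀ g : Fin m → Bool, okPred (m := m+1) h (Fin.snoc g true) ↔ okPred (h-1) g := by
    intro g
    simpa [dstep] using mem_okSet_succ hh g true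
  have e2 : ∀ g : Fin m → Bool, okPred (m := m+1) h (Fin.snoc g false) ↔ okPred (h+1) g := by
    intro g
    have := mem_okSet_succ hh g false
    simpa [dstep, sub_neg_eq_add] using this
  rw [okSet, Finset.sum_filter]
  rw [← Equiv.sum_comp (snocEquiv m) (fun f => if okPred h f then F f else 0)]
  rw [Fintype.sum_prod_type]
  simp only [snocEquiv, Equiv.coe_fn_mk]
  rw [Finset.sum_comm]
  rw [Fintype.sum_bool]
  rw [key (h-1) true, key (h+1) false]
  congr 1
  · exact Finset.sum_congr rfl fun g _ => by simp only [e1]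
  · exact Finset.sum_congr rfl fun g _ => by simp only [e2]

lemma NW_succ {m : ℕ} {h : ℤ} (hh : 0 ≤ h) :
    NW (m+1) h = NW m (h-1) + NW m (h+1) := by
  have := sum_okSet_succ (m := m) hh (fun _ => (1 : ℚ))
  simp only [Finset.sum_const, nsmul_eq_mul, mul_one] at this
  rw [NW, NW, NW]
  exact_mod_cast this

lemma SW_succ {m : ℕ} {h : ℤ} (hh : 0 ≤ h) :
    SW (m+1) h = SW m (h-1) + SW m (h+1) + h * (NW m (h-1) + NW m (h+1)) := by
  have main := sum_okSet_succ (m := m) hh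
      (fun f => ∑ k ∈ Finset.range (m+2), ((dheight f k : ℤ) : ℚ))
  have inner : ∀ (h' : ℤ) (b : Bool), dstep b = h - h' →
      ∀ g ∈ okSet m h',
      (∑ k ∈ Finset.range (m+2), ((dheight (Fin.snoc g b) k : ℤ) : ℚ)) =
      (∑ k ∈ Finset.range (m+1), ((dheight g k : ℤ) : ℚ)) + h := by
    intro h' b hb g hg
    rw [Finset.sum_range_succ]
    have hend : dheight (Fin.snoc g b) (m+1) = h := by
      rw [dheight_last, Fin.snoc_last, dheight_snoc g b m le_rfl]
      have : dheight g m = h' := by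
        have := (Finset.mem_filter.mp hg).2
        exact this.2
      omega
    rw [hend]
    congr 1
    apply Finset.sum_congr rfl
    intro k hk
    rw [dheight_snoc g b k (by simpa [Nat.lt_succ_iff] using hk)]
  rw [SW]
  show _ = _
  rw [main]
  rw [Finset.sum_congr rfl (inner (h-1) true (by simp [dstep])),
      Finset.sum_congr rfl (inner (h+1) false (by simp [dstep]))]
  simp only [Finset.sum_add_distrib, Finset.sum_const, nsmul_eq_mul]
  rw [SW, SW, NW, NW]
  ring




def Cb (u d : ℕ) : ℚ := (Nat.choose (u+d) d : ℚ) - (Nat.choose (u+d) (u+1) : ℚ)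

def Sb (u d : ℕ) : ℚ :=
    (((u:ℚ)-d)*((u:ℚ)+d+2) - ((u:ℚ)+d)*((u:ℚ)+d+3)/2) * (Nat.choose (u+d) d : ℚ)
  + (((u:ℚ)+d+1)*((u:ℚ)+d+4)/2) * (Nat.choose (u+d) (u+1) : ℚ)
  + 2*((u:ℚ)-d+1) * ∑ i ∈ Finset.range d, (Nat.choose (u+d) i : ℚ)

lemma sum_choose_succ (M e : ℕ) :
    ∑ i ∈ Finset.range (e+1), (Nat.choose (M+1) i : ℚ) =
      (∑ i ∈ Finset.range (e+1), (Nat.choose M i : ℚ)) +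
      ∑ i ∈ Finset.range e, (Nat.choose M i : ℚ) := by
  induction e with
  | zero => simp
  | succ e ih =>
    have h1 := Finset.sum_range_succ (fun i => (Nat.choose (M+1) i : ℚ)) (e+1)
    have h2 := Finset.sum_range_succ (fun i => (Nat.choose M i : ℚ)) (e+1)
    have h3 := Finset.sum_range_succ (fun i => (Nat.choose M i : ℚ)) e
    have h4 : (Nat.choose (M+1) (e+1) : ℚ) = Nat.choose M e + Nat.choose M (e+1) := by
      exact_mod_cast congrArg (Nat.cast (R := ℚ)) (Nat.choose_succ_succ' M e)
    rw [h1, ih, h4]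
    linarith [h2, h3]

set_option maxHeartbeats 2000000 in
theorem key : ∀ m : ℕ, ∀ u d : ℕ, u + d = m → d ≤ u →
    NW m ((u:ℤ) - d) = Cb u d ∧ SW m ((u:ℤ) - d) = Sb u d := by
  intro m
  induction m with
  | zero =>
    intro u d hud _
    obtain ⟨rfl, rfl⟩ : u = 0 ∧ d = 0 := by omega
    refine ⟨?_, ?_⟩
    · rw [NW_zero]; norm_num [Cb]
    · rw [SW_zero]; norm_num [Sb]
  | succ m ih =>
    intro u d hud hdu
    have hh : (0:ℤ) ≤ (u:ℤ) - d := by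
      have := hdu; omega
    rcases Nat.eq_zero_or_pos d with rfl | hd
    · -- d = 0, u = m+1
      obtain rfl : u = m + 1 := by omega
      have hbig : ((m:ℕ):ℤ) < ((m+1:ℕ):ℤ) - ((0:ℕ):ℤ) + 1 := by push_cast; omega
      have ihm := ih m 0 (by omega) (by omega)
      have e1 : ((m+1:ℕ):ℤ) - ((0:ℕ):ℤ) - 1 = ((m:ℕ):ℤ) - ((0:ℕ):ℤ) := by push_cast; ring
      have z1 : Nat.choose (m+1+0) (m+1+1) = 0 := Nat.choose_eq_zero_of_lt (by omega)
      have z2 : Nat.choose (m+0) (m+1) = 0 := Nat.choose_eq_zero_of_lt (by omega)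
      constructor
      · rw [NW_succ hh, e1, ihm.1, NW_big hbig]
        simp only [Cb, z1, z2]
        norm_num
      · rw [SW_succ hh, e1, ihm.1, ihm.2, SW_big hbig, NW_big hbig]
        simp only [Sb, Cb, z1, z2]
        norm_num
        ring
    · rcases Nat.lt_or_ge d u with hlt | hge
      · -- main case: u = a+1, d = b+1, b+1 ≤ a
        obtain ⟨a, rfl⟩ : ∃ a, u = a + 1 := ⟨u - 1, by omega⟩
        obtain ⟨b, rfl⟩ : ∃ b, d = b + 1 := ⟨d - 1, by omega⟩
        have hba : b + 1 ≤ a := by omega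
        have ih1 := ih a (b+1) (by omega) (by omega)
        have ih2 := ih (a+1) b (by omega) (by omega)
        have e1 : ((a+1:ℕ):ℤ) - ((b+1:ℕ):ℤ) - 1 = ((a:ℕ):ℤ) - ((b+1:ℕ):ℤ) := by push_cast; ring
        have e2 : ((a+1:ℕ):ℤ) - ((b+1:ℕ):ℤ) + 1 = ((a+1:ℕ):ℤ) - ((b:ℕ):ℤ) := by push_cast; ring
        set M := a + b + 1 with hM
        have hm : m = M := by omega
        subst hm
        have hsym : (Nat.choose M (a+1) : ℚ) = Nat.choose M b := by
          have h := Nat.choose_symm (show b ≤ M by omega)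
          rw [show M - b = a + 1 by omega] at h
          exact_mod_cast h
        have hX1 : (Nat.choose M (b+1) : ℚ) * ((b:ℚ)+1) = (Nat.choose M b : ℚ) * ((a:ℚ)+1) := by
          have h := Nat.choose_succ_right_eq M b
          rw [show M - b = a + 1 by omega] at h
          exact_mod_cast congrArg (Nat.cast (R := ℚ)) h
        have hX3 : (Nat.choose M (a+2) : ℚ) * ((a:ℚ)+2) = (Nat.choose M b : ℚ) * (b:ℚ) := by
          have h := Nat.choose_succ_right_eq M (a+1)
          rw [show M - (a+1) = b by omega] at h
          have h' := congrArg (Nat.cast (R := ℚ)) h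
          push_cast at h'
          rw [hsym] at h'
          linarith
        constructor
        · rw [NW_succ hh, e1, e2, ih1.1, ih2.1]
          simp only [Cb]
          rw [show a + 1 + (b+1) = M + 1 by omega, show a + (b+1) = M by omega,
              show a + 1 + b = M by omega,
              Nat.choose_succ_succ' M b, Nat.choose_succ_succ' M (a+1)]
          push_cast
          ring
        · rw [SW_succ hh, e1, e2, ih1.1, ih2.1, ih1.2, ih2.2]
          simp only [Sb, Cb]
          rw [show a + 1 + (b+1) = M + 1 by omega, show a + (b+1) = M by omega,
              show a + 1 + b = M by omega,
              Nat.choose_succ_succ' M b, Nat.choose_succ_succ' M (a+1),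
              sum_choose_succ M b,
              Finset.sum_range_succ (fun i => (Nat.choose M i : ℚ))]
          have hb1 : ((b:ℚ)+1) ≠ 0 := by positivity
          have ha2 : ((a:ℚ)+2) ≠ 0 := by positivity
          have hX1' : (Nat.choose M (b+1) : ℚ) = (Nat.choose M b : ℚ) * ((a:ℚ)+1) / ((b:ℚ)+1) := by
            field_simp
            linarith [hX1]
          have hX3' : (Nat.choose M (a+2) : ℚ) = (Nat.choose M b : ℚ) * (b:ℚ) / ((a:ℚ)+2) := by
            field_simp
            linarith [hX3]
          push_cast
          rw [hX1', hX3', hsym]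
          field_simp
          ring
      · -- u = d case
        obtain ⟨e, rfl, rfl⟩ : ∃ e, u = e + 1 ∧ d = e + 1 := ⟨u - 1, by omega, by omega⟩
        have h0 : ((e+1:ℕ):ℤ) - ((e+1:ℕ):ℤ) = 0 := by ring
        have hneg : ((e+1:ℕ):ℤ) - ((e+1:ℕ):ℤ) - 1 < 0 := by omega
        have ih2 := ih (e+1) e (by omega) (by omega)
        have e2 : ((e+1:ℕ):ℤ) - ((e+1:ℕ):ℤ) + 1 = ((e+1:ℕ):ℤ) - ((e:ℕ):ℤ) := by push_cast; ring
        set M := 2*e + 1 with hM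
        have hm : m = M := by omega
        subst hm
        have hsym : (Nat.choose M (e+1) : ℚ) = Nat.choose M e := by
          have h := Nat.choose_symm (show e + 1 ≤ M by omega)
          rw [show M - (e+1) = e by omega] at h
          exact_mod_cast h.symm
        have hX3 : (Nat.choose M (e+2) : ℚ) * ((e:ℚ)+2) = (Nat.choose M e : ℚ) * (e:ℚ) := by
          have h := Nat.choose_succ_right_eq M (e+1)
          rw [show M - (e+1) = e by omega] at h
          have h' := congrArg (Nat.cast (R := ℚ)) h
          push_cast at h'
          rw [hsym] at h'
          linarith
        constructor
        · rw [NW_succ hh, NW_neg hneg, e2, ih2.1]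
          simp only [Cb]
          rw [show e + 1 + (e+1) = M + 1 by omega, show e + 1 + e = M by omega,
              Nat.choose_succ_succ' M e, Nat.choose_succ_succ' M (e+1)]
          push_cast
          ring
        · rw [SW_succ hh, SW_neg hneg, NW_neg hneg, e2, ih2.1, ih2.2, h0]
          simp only [Sb, Cb]
          rw [show e + 1 + (e+1) = M + 1 by omega, show e + 1 + e = M by omega,
              Nat.choose_succ_succ' M e, Nat.choose_succ_succ' M (e+1),
              sum_choose_succ M e,
              Finset.sum_range_succ (fun i => (Nat.choose M i : ℚ))]
          have he2 : ((e:ℚ)+2) ≠ 0 := by positivity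
          have hX3' : (Nat.choose M (e+2) : ℚ) = (Nat.choose M e : ℚ) * (e:ℚ) / ((e:ℚ)+2) := by
            field_simp
            linarith [hX3]
          push_cast
          rw [hX3', hsym]
          field_simp
          ring



lemma sum_half (n : ℕ) :
    2 * (∑ i ∈ Finset.range n, (Nat.choose (2*n) i : ℚ)) + (Nat.choose (2*n) n : ℚ) = 4^n := by
  have base : ∑ i ∈ Finset.range (2*n+1), Nat.choose (2*n) i = 4^n := by
    rw [Nat.sum_range_choose]
    rw [show (4:ℕ)^n = (2^2)^n by norm_num, ← pow_mul]
  have split : ∑ i ∈ Finset.range (2*n+1), Nat.choose (2*n) i =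
      (∑ i ∈ Finset.range n, Nat.choose (2*n) i) + ∑ i ∈ Finset.Ico n (2*n+1), Nat.choose (2*n) i := by
    rw [Finset.range_eq_Ico, ← Finset.sum_Ico_consecutive _ (by omega : 0 ≤ n) (by omega : n ≤ 2*n+1)]
    rw [Finset.range_eq_Ico]
  have shift : ∑ i ∈ Finset.Ico n (2*n+1), Nat.choose (2*n) i =
      ∑ i ∈ Finset.range (n+1), Nat.choose (2*n) (n+i) := by
    rw [Finset.sum_Ico_eq_sum_range, show 2*n+1-n = n+1 by omega]
  have refl1 : ∑ i ∈ Finset.range (n+1), Nat.choose (2*n) (n+i) =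
      ∑ i ∈ Finset.range (n+1), Nat.choose (2*n) (n-i) := by
    apply Finset.sum_congr rfl
    intro i hi
    have hi' : i ≤ n := by simpa [Nat.lt_succ_iff] using hi
    rw [← Nat.choose_symm (by omega : n + i ≤ 2*n)]
    congr 1
    omega
  have refl2 : ∑ i ∈ Finset.range (n+1), Nat.choose (2*n) (n-i) =
      ∑ i ∈ Finset.range (n+1), Nat.choose (2*n) i := by
    have := Finset.sum_range_reflect (fun i => Nat.choose (2*n) i) (n+1)
    simpa using this
  have last : ∑ i ∈ Finset.range (n+1), Nat.choose (2*n) i =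
      (∑ i ∈ Finset.range n, Nat.choose (2*n) i) + Nat.choose (2*n) n := Finset.sum_range_succ _ _
  have main : (4:ℕ)^n = (∑ i ∈ Finset.range n, Nat.choose (2*n) i) +
      ((∑ i ∈ Finset.range n, Nat.choose (2*n) i) + Nat.choose (2*n) n) := by
    rw [← base, split, shift, refl1, refl2, last]
  have := congrArg (Nat.cast (R := ℚ)) main
  push_cast at this
  linarith


lemma dyckPowerSum_eq_SW (n : ℕ) : dyckPowerSum n 1 = SW (2*n) 0 := by
  rw [dyckPowerSum]
  have hset : Finset.univ.filter (fun f : Fin (2*n) → Bool => IsDyck f) = okSet (2*n) 0 := by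
    ext f
    simp only [okSet, mem_filter, mem_univ, true_and, okPred]
    unfold IsDyck
    constructor
    · rintro ⟨h0, hk⟩
      refine ⟨?_, h0⟩
      intro k hk'
      rcases Nat.lt_or_ge k (2*n) with hlt | hge
      · exact hk k (mem_range.mpr hlt)
      · have hkk : k = 2*n := by simp only [mem_range] at hk'; omega
        rw [hkk, h0]
    · rintro ⟨hk, h0⟩
      exact ⟨h0, fun k hk' => hk k (by simp only [mem_range] at hk' ⊢; omega)⟩
  rw [hset, SW]
  apply Finset.sum_congr rfl
  intro f hf
  have h0 : dheight f (2*n) = 0 := (Finset.mem_filter.mp hf).2.2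
  rw [pow_one, darea, Finset.sum_range_succ (fun k => ((dheight f k : ℤ) : ℚ)), h0]
  push_cast
  simp

lemma cat_eq (n : ℕ) : cat n = (Nat.choose (2*n) n : ℚ) / (n+1) := by
  have hc : (Nat.choose (2*n) n : ℚ) =
      (Nat.factorial (2*n) : ℚ) / ((Nat.factorial n : ℚ) * (Nat.factorial n : ℚ)) := by
    rw [Nat.cast_choose ℚ (show n ≤ 2*n by omega), show 2*n - n = n by omega]
  rw [cat, hc, Nat.factorial_succ, div_div]
  congr 1
  push_cast
  ring

lemma Sb_eq (n : ℕ) : Sb n n = -(2*(n:ℚ)+1) * cat n + 4^n := by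
  rw [Sb, show n + n = 2*n by ring]
  have f1 : (Nat.choose (2*n) (n+1) : ℚ) * ((n:ℚ)+1) = (Nat.choose (2*n) n : ℚ) * (n:ℚ) := by
    have h := Nat.choose_succ_right_eq (2*n) n
    rw [show 2*n - n = n by omega] at h
    exact_mod_cast congrArg (Nat.cast (R := ℚ)) h
  have h2 : ((n:ℚ)+1) ≠ 0 := by positivity
  have hD : (Nat.choose (2*n) (n+1) : ℚ) = (Nat.choose (2*n) n : ℚ) * (n:ℚ) / ((n:ℚ)+1) := by
    field_simp
    linarith [f1]
  have hS : (∑ i ∈ Finset.range n, (Nat.choose (2*n) i : ℚ)) =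
      ((4:ℚ)^n - (Nat.choose (2*n) n : ℚ)) / 2 := by
    linarith [sum_half n]
  rw [hD, hS, cat_eq]
  field_simp
  ring

end DyckAux

theorem dyck_area_sum (n : ℕ) :
    dyckPowerSum n 1 = -(2*(n:ℚ)+1) * cat n + 4^n := by
  rw [DyckAux.dyckPowerSum_eq_SW]
  have hk := (DyckAux.key (2*n) n n (by ring) le_rfl).2
  rw [show ((n:ℤ) - (n:ℤ)) = 0 by ring] at hk
  rw [hk, DyckAux.Sb_eq]
end

section
/- The sum of the cubes of the areas under all Dyck paths from (0,0) to (2n,0) equals (-20n^4 - 60n^3 - 61n^2 - 26n - 4)·C(n) + ((15/4)n^3 + (75/4)n^2 + (33/2)n + 4)·4^n, where C(n) is the n-th Catalan number. -/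
open Finset

open DyckStep

/-! ### list-level heights and area -/

def hgt (l : List DyckStep) : ℤ := (l.count U : ℤ) - (l.count D : ℤ)

def areaL (l : List DyckStep) : ℤ := ∑ k ∈ Finset.range l.length, hgt (l.take k)

def areaW (p : DyckWord) : ℤ := areaL p.toList

lemma hgt_append (l₁ l₂ : List DyckStep) : hgt (l₁ ++ l₂) = hgt l₁ + hgt l₂ := by
  simp [hgt, List.count_append]; ring

lemma hgt_dyck (p : DyckWord) : hgt p.toList = 0 := by
  simp [hgt, p.count_U_eq_count_D]

lemma areaL_append (l₁ l₂ : List DyckStep) (h : hgt l₁ = 0) :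
    areaL (l₁ ++ l₂) = areaL l₁ + areaL l₂ := by
  unfold areaL
  rw [List.length_append, Finset.sum_range_add]
  congr 1
  · apply Finset.sum_congr rfl
    intro k hk
    rw [Finset.mem_range] at hk
    rw [List.take_append_of_le_length hk.le]
  · apply Finset.sum_congr rfl
    intro k hk
    rw [List.take_append, hgt_append, List.take_of_length_le (Nat.le_add_right _ _), h, zero_add,
      Nat.add_sub_cancel_left]

lemma areaW_add (p q : DyckWord) : areaW (p + q) = areaW p + areaW q := by
  have : (p + q).toList = p.toList ++ q.toList := rfl
  unfold areaW
  rw [this, areaL_append _ _ (hgt_dyck p)]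

lemma length_nest (p : DyckWord) : p.nest.toList.length = p.toList.length + 2 := by
  have : p.nest.toList = U :: p.toList ++ [D] := rfl
  simp [this]

lemma areaW_nest (p : DyckWord) : areaW p.nest = areaW p + 2 * p.semilength + 1 := by
  have hl : p.nest.toList = U :: (p.toList ++ [D]) := rfl
  unfold areaW areaL
  rw [length_nest, hl]
  have h2 : p.toList.length + 2 = (p.toList.length + 1) + 1 := rfl
  rw [h2, Finset.sum_range_succ' (fun k => hgt ((U :: (p.toList ++ [D])).take k))]
  have hterm : ∀ j ∈ Finset.range (p.toList.length + 1),
      hgt ((U :: (p.toList ++ [D])).take (j+1)) = 1 + hgt (p.toList.take j) := by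
    intro j hj
    rw [Finset.mem_range] at hj
    have : (U :: (p.toList ++ [D])).take (j+1) = U :: ((p.toList ++ [D]).take j) := rfl
    rw [this, List.take_append_of_le_length (by omega)]
    simp [hgt, List.count_cons]
    ring
  rw [Finset.sum_congr rfl hterm]
  rw [Finset.sum_add_distrib, Finset.sum_const, Finset.sum_range_succ]
  rw [List.take_length, hgt_dyck p]
  simp [List.take]
  have := p.two_mul_semilength_eq_length
  push_cast [← this]
  have hnil : hgt [] = 0 := by simp [hgt]
  rw [hnil]
  ring

/-! ### bridge between `Fin m → Bool` paths and lists -/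

def toL {m : ℕ} (f : Fin m → Bool) : List DyckStep :=
  List.ofFn (fun i => if f i then U else D)

lemma toL_length {m : ℕ} (f : Fin m → Bool) : (toL f).length = m := by simp [toL]

lemma dheight_succ {m : ℕ} (f : Fin m → Bool) (k : ℕ) :
    dheight f (k+1) = dheight f k + (if h : k < m then dstep (f ⟨k, h⟩) else 0) := by
  by_cases h : k < m
  · rw [dif_pos h]
    have hins : Finset.univ.filter (fun i : Fin m => (i : ℕ) < k+1)
        = insert ⟨k, h⟩ (Finset.univ.filter (fun i : Fin m => (i : ℕ) < k)) := by
      ext i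
      simp only [Finset.mem_filter, Finset.mem_univ, true_and, Finset.mem_insert, Fin.ext_iff]
      omega
    rw [dheight, hins, Finset.sum_insert (by simp)]
    rw [dheight]; ring
  · rw [dif_neg h, add_zero]
    unfold dheight
    apply Finset.sum_congr _ (fun _ _ => rfl)
    ext i
    simp only [Finset.mem_filter, Finset.mem_univ, true_and]
    have := i.isLt
    omega

lemma hgt_single (b : Bool) : hgt [if b then U else D] = dstep b := by
  cases b <;> simp [hgt, dstep, List.count_singleton]

lemma dheight_eq_hgt {m : ℕ} (f : Fin m → Bool) (k : ℕ) :
    dheight f k = hgt ((toL f).take k) := by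
  induction k with
  | zero => simp [dheight, hgt]
  | succ k ih =>
    rw [dheight_succ, ih, List.take_succ]
    by_cases h : k < m
    · rw [dif_pos h]
      have : (toL f)[k]? = some (if f ⟨k, h⟩ then U else D) := by
        rw [toL, List.getElem?_ofFn]
        simp [List.ofFnNthVal, h]
      rw [this]
      simp only [Option.toList_some]
      rw [hgt_append, hgt_single]
    · rw [dif_neg h]
      have : (toL f)[k]? = none := by
        rw [toL, List.getElem?_ofFn]
        simp [List.ofFnNthVal, h]
      rw [this]
      simp [hgt_append]

lemma darea_eq_areaL {m : ℕ} (f : Fin m → Bool) : darea f = areaL (toL f) := by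
  unfold darea areaL
  rw [toL_length]
  exact Finset.sum_congr rfl (fun k _ => dheight_eq_hgt f k)

lemma isDyck_iff {m : ℕ} (f : Fin m → Bool) :
    IsDyck f ↔ ((toL f).count U = (toL f).count D ∧
      ∀ i, ((toL f).take i).count D ≤ ((toL f).take i).count U) := by
  have htake : (toL f).take m = toL f := by
    apply List.take_of_length_le; rw [toL_length]
  constructor
  · rintro ⟨h0, hpos⟩
    have h0' : hgt (toL f) = 0 := by rw [← htake, ← dheight_eq_hgt]; exact h0
    constructor
    · unfold hgt at h0'; omega
    · intro i
      by_cases hi : i < m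
      · have := hpos i (Finset.mem_range.mpr hi)
        rw [dheight_eq_hgt] at this
        unfold hgt at this; omega
      · have : (toL f).take i = toL f := by
          apply List.take_of_length_le; rw [toL_length]; omega
        rw [this]
        unfold hgt at h0'; omega
  · rintro ⟨h0, hpos⟩
    constructor
    · rw [dheight_eq_hgt, htake]; unfold hgt; omega
    · intro k _
      rw [dheight_eq_hgt]
      have := hpos k
      unfold hgt; omega

def toDW {m : ℕ} (f : Fin m → Bool) (hf : IsDyck f) : DyckWord :=
  ⟨toL f, ((isDyck_iff f).1 hf).1, fun i => ((isDyck_iff f).1 hf).2 i⟩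

lemma toDW_toList {m : ℕ} (f : Fin m → Bool) (hf : IsDyck f) : (toDW f hf).toList = toL f := rfl

lemma toDW_semilength {n : ℕ} (f : Fin (2*n) → Bool) (hf : IsDyck f) :
    (toDW f hf).semilength = n := by
  have h := (toDW f hf).two_mul_semilength_eq_length
  rw [toDW_toList, toL_length] at h
  omega

/-- inverse map -/
def ofDW {n : ℕ} (p : DyckWord) (hp : p.semilength = n) : Fin (2*n) → Bool :=
  fun i => decide (p.toList[(i : ℕ)]'(by
    have h := p.two_mul_semilength_eq_length
    rw [hp] at h
    omega) = U)

lemma toL_ofDW {n : ℕ} (p : DyckWord) (hp : p.semilength = n) : toL (ofDW p hp) = p.toList := by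
  have hlen : p.toList.length = 2*n := by
    have h := p.two_mul_semilength_eq_length; omega
  apply List.ext_getElem
  · rw [toL_length, hlen]
  · intro i h1 h2
    rw [toL_length] at h1
    have : (toL (ofDW p hp))[i] = if ofDW p hp ⟨i, h1⟩ then U else D := by
      simp [toL]
    rw [this]
    unfold ofDW
    rcases (p.toList[i]'h2).dichotomy with h | h <;> simp [h]

lemma isDyck_ofDW {n : ℕ} (p : DyckWord) (hp : p.semilength = n) : IsDyck (ofDW p hp) := by
  rw [isDyck_iff, toL_ofDW]
  exact ⟨p.count_U_eq_count_D, p.count_D_le_count_U⟩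

/-! ### sum over Dyck functions = sum over Dyck words -/

lemma sum_dyck_eq (n : ℕ) (φ : ℤ → ℚ) :
    ∑ f ∈ Finset.univ.filter (fun f : Fin (2*n) → Bool => IsDyck f), φ (darea f)
      = ∑ p : {p : DyckWord // p.semilength = n}, φ (areaW p.1) := by
  refine Finset.sum_bij'
    (i := fun f hf => (⟨toDW f (by simpa using hf), toDW_semilength f _⟩ :
      {p : DyckWord // p.semilength = n}))
    (j := fun p _ => ofDW p.1 p.2) ?_ ?_ ?_ ?_ ?_
  · intro a _; exact Finset.mem_univ _
  · intro p _
    simp only [Finset.mem_filter, Finset.mem_univ, true_and]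
    exact isDyck_ofDW p.1 p.2
  · intro f hf
    funext i
    have h1 : (toDW f (by simpa using hf)).toList = toL f := rfl
    unfold ofDW
    cases hfi : f i <;> simp [h1, toL, hfi]
  · intro p _
    apply Subtype.ext
    apply DyckWord.ext
    rw [toDW_toList, toL_ofDW]
  · intro f hf
    rw [darea_eq_areaL]
    rfl

/-! ### first-return decomposition -/

lemma ne_zero_of_semilength_succ {p : DyckWord} {n : ℕ} (h : p.semilength = n+1) : p ≠ 0 := by
  intro h0; rw [h0] at h; simp at h

def PairT (n : ℕ) : Type := {ab : DyckWord × DyckWord // ab.1.semilength + ab.2.semilength = n}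

def E1 (n : ℕ) : {p : DyckWord // p.semilength = n+1} ≃ PairT n where
  toFun p := ⟨(p.1.insidePart, p.1.outsidePart), by
    have h0 := ne_zero_of_semilength_succ p.2
    have := DyckWord.semilength_insidePart_add_semilength_outsidePart_add_one h0
    have h2 := p.2
    dsimp only
    omega⟩
  invFun ab := ⟨ab.1.1.nest + ab.1.2, by
    have h2 := ab.2
    rw [DyckWord.semilength_add, DyckWord.semilength_nest]
    omega⟩
  left_inv p := Subtype.ext (DyckWord.nest_insidePart_add_outsidePart
    (ne_zero_of_semilength_succ p.2))
  right_inv ab := by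
    apply Subtype.ext
    apply Prod.ext
    · show (ab.1.1.nest + ab.1.2).insidePart = ab.1.1
      rw [DyckWord.insidePart_add DyckWord.nest_ne_zero, DyckWord.insidePart_nest]
    · show (ab.1.1.nest + ab.1.2).outsidePart = ab.1.2
      rw [DyckWord.outsidePart_add DyckWord.nest_ne_zero, DyckWord.outsidePart_nest, zero_add]

instance (n : ℕ) : Fintype (PairT n) := Fintype.ofEquiv _ (E1 n)

lemma step1 (n : ℕ) (φ : ℤ → ℚ) :
    ∑ p : {p : DyckWord // p.semilength = n+1}, φ (areaW p.1)
      = ∑ ab : PairT n,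
          φ (areaW ab.1.1 + areaW ab.1.2 + (2*(ab.1.1.semilength : ℤ)+1)) := by
  apply Fintype.sum_equiv (E1 n)
  intro p
  have h0 := ne_zero_of_semilength_succ p.2
  have harea := congrArg areaW (DyckWord.nest_insidePart_add_outsidePart h0)
  rw [areaW_add, areaW_nest] at harea
  show φ (areaW p.1) = φ (areaW p.1.insidePart + areaW p.1.outsidePart
    + (2*(p.1.insidePart.semilength : ℤ)+1))
  rw [← harea]
  congr 1
  ring

lemma step2 (n : ℕ) (F : PairT n → ℚ) :
    ∑ ab : PairT n, F ab
      = ∑ k ∈ Finset.range (n+1),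
          ∑ ab ∈ Finset.univ.filter (fun ab : PairT n => ab.1.1.semilength = k), F ab := by
  rw [Finset.sum_fiberwise_of_maps_to]
  intro ab _
  rw [Finset.mem_range]
  have := ab.2
  omega

lemma step3 (n k : ℕ) (hk : k ≤ n) (φ : ℤ → ℚ) :
    ∑ ab ∈ Finset.univ.filter (fun ab : PairT n => ab.1.1.semilength = k),
        φ (areaW ab.1.1 + areaW ab.1.2 + (2*(ab.1.1.semilength : ℤ)+1))
      = ∑ a : {a : DyckWord // a.semilength = k},
          ∑ b : {b : DyckWord // b.semilength = n-k},
            φ (areaW a.1 + areaW b.1 + (2*(k:ℤ)+1)) := by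
  calc ∑ ab ∈ Finset.univ.filter (fun ab : PairT n => ab.1.1.semilength = k),
        φ (areaW ab.1.1 + areaW ab.1.2 + (2*(ab.1.1.semilength : ℤ)+1))
      = ∑ x : {a : DyckWord // a.semilength = k} × {b : DyckWord // b.semilength = n-k},
          φ (areaW x.1.1 + areaW x.2.1 + (2*(k:ℤ)+1)) := by
        refine Finset.sum_bij'
          (i := fun ab hab => ((⟨ab.1.1, by simpa using hab⟩ : {a : DyckWord // a.semilength = k}),
            (⟨ab.1.2, by
              have h1 : ab.1.1.semilength = k := by simpa using hab
              have h2 := ab.2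
              omega⟩ : {b : DyckWord // b.semilength = n-k})))
          (j := fun x _ => ⟨(x.1.1, x.2.1), by rw [x.1.2, x.2.2]; omega⟩) ?_ ?_ ?_ ?_ ?_
        · intro a _; exact Finset.mem_univ _
        · intro x _
          exact Finset.mem_filter.mpr ⟨Finset.mem_univ _, x.1.2⟩
        · intro ab _; rfl
        · intro x _; rfl
        · intro ab hab
          have h1 : ab.1.1.semilength = k := by simpa using hab
          exact congrArg (fun z : ℕ => φ (areaW ab.1.1 + areaW ab.1.2 + (2*(z:ℤ)+1))) h1
    _ = ∑ a : {a : DyckWord // a.semilength = k},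
          ∑ b : {b : DyckWord // b.semilength = n-k},
            φ (areaW a.1 + areaW b.1 + (2*(k:ℤ)+1)) :=
        Fintype.sum_prod_type _

theorem master (n : ℕ) (φ : ℤ → ℚ) :
    ∑ f ∈ Finset.univ.filter (fun f : Fin (2*(n+1)) → Bool => IsDyck f), φ (darea f)
      = ∑ k ∈ Finset.range (n+1),
          ∑ f ∈ Finset.univ.filter (fun f : Fin (2*k) → Bool => IsDyck f),
            ∑ g ∈ Finset.univ.filter (fun g : Fin (2*(n-k)) → Bool => IsDyck g),
              φ (darea f + darea g + (2*(k:ℤ)+1)) := by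
  rw [sum_dyck_eq (n+1) φ, step1, step2]
  apply Finset.sum_congr rfl
  intro k hk
  rw [Finset.mem_range] at hk
  rw [step3 n k (by omega) φ]
  rw [sum_dyck_eq k (fun z => ∑ g ∈ Finset.univ.filter
    (fun g : Fin (2*(n-k)) → Bool => IsDyck g), φ (z + darea g + (2*(k:ℤ)+1)))]
  apply Finset.sum_congr rfl
  intro a _
  rw [sum_dyck_eq (n-k) (fun z => φ (areaW a.1 + z + (2*(k:ℤ)+1)))]

noncomputable def CQ (n : ℕ) : ℚ := (catalan n : ℚ)
noncomputable def bQ (n : ℕ) : ℚ := ((n : ℚ) + 1) * CQ n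

lemma CQ_zero : CQ 0 = 1 := by simp [CQ]

lemma hcbQ (n : ℕ) : ((n:ℚ)+1) * CQ n = (Nat.centralBinom n : ℚ) := by
  have h1 := succ_mul_catalan_eq_centralBinom n
  unfold CQ
  exact_mod_cast congrArg (Nat.cast (R := ℚ)) h1

lemma L1 (n : ℕ) : ((n:ℚ)+2) * CQ (n+1) = 2*(2*(n:ℚ)+1) * CQ n := by
  have h3 := Nat.succ_mul_centralBinom_succ n
  have hq3 : ((n:ℚ)+1) * (Nat.centralBinom (n+1) : ℚ)
      = 2*(2*(n:ℚ)+1) * (Nat.centralBinom n : ℚ) := by exact_mod_cast h3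
  have hq1 := hcbQ n
  have hq2 := hcbQ (n+1)
  have hne : ((n:ℚ)+1) ≠ 0 := by positivity
  apply mul_left_cancel₀ hne
  push_cast at hq2
  linear_combination ((n:ℚ)+1)*hq2 + hq3 - (2*(2*(n:ℚ)+1))*hq1

lemma cat_eq_CQ (n : ℕ) : cat n = CQ n := by
  have hle : n ≤ 2*n := by omega
  have hfact : Nat.centralBinom n * (Nat.factorial n * Nat.factorial n)
      = Nat.factorial (2*n) := by
    have := Nat.choose_mul_factorial_mul_factorial hle
    rw [show 2*n - n = n by omega] at this
    rw [Nat.centralBinom, ← this]; ring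
  unfold cat
  rw [div_eq_iff (by positivity)]
  have h2 : ((Nat.factorial (2*n) : ℚ)) = (Nat.centralBinom n : ℚ) * (Nat.factorial n * Nat.factorial n) := by
    exact_mod_cast hfact.symm
  rw [h2, ← hcbQ n, Nat.factorial_succ]
  push_cast; ring

lemma reflect_sum (n : ℕ) (f : ℕ → ℕ → ℚ) :
    ∑ k ∈ range (n+1), f k (n-k) = ∑ k ∈ range (n+1), f (n-k) k := by
  have h := Finset.sum_range_reflect (fun j => f j (n-j)) (n+1)
  rw [← h]
  apply Finset.sum_congr rfl
  intro j hj; rw [Finset.mem_range] at hj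
  rw [show n+1-1-j = n-j by omega, show n - (n-j) = j by omega]

lemma tri_swap (N : ℕ) (f : ℕ → ℕ → ℚ) :
    ∑ i ∈ range N, ∑ j ∈ range (i+1), f j i
      = ∑ j ∈ range N, ∑ m ∈ range (N-j), f j (j+m) := by
  induction N with
  | zero => simp
  | succ N ih =>
    rw [Finset.sum_range_succ (fun i => ∑ j ∈ range (i+1), f j i), ih]
    have hsplit : ∀ j ∈ range N, ∑ m ∈ range (N+1-j), f j (j+m)
        = ∑ m ∈ range (N-j), f j (j+m) + f j N := by
      intro j hj; rw [Finset.mem_range] at hj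
      rw [show N+1-j = (N-j)+1 by omega, Finset.sum_range_succ, show j+(N-j) = N by omega]
    rw [Finset.sum_range_succ (fun j => ∑ m ∈ range (N+1-j), f j (j+m)),
      Finset.sum_congr rfl hsplit, Finset.sum_add_distrib,
      show N+1-N = 1 by omega, Finset.sum_range_one, add_zero,
      Finset.sum_range_succ (fun j => f j N)]
    ring

lemma S0 (n : ℕ) : ∑ k ∈ range (n+1), CQ k * CQ (n-k) = CQ (n+1) := by
  have h : (catalan (n+1) : ℚ) = ∑ k ∈ range (n+1), (catalan k : ℚ) * (catalan (n-k) : ℚ) := by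
    rw [catalan_succ, Fin.sum_univ_eq_sum_range (fun i => catalan i * catalan (n - i)) (n+1)]
    push_cast
    rfl
  unfold CQ
  rw [← h]

lemma S1 (n : ℕ) : ∑ k ∈ range (n+1), (k:ℚ) * (CQ k * CQ (n-k)) = (n:ℚ)/2 * CQ (n+1) := by
  have hr : ∑ k ∈ range (n+1), (k:ℚ) * (CQ k * CQ (n-k))
      = ∑ k ∈ range (n+1), ((n:ℚ)-(k:ℚ)) * (CQ k * CQ (n-k)) := by
    rw [reflect_sum n (fun a b => (a:ℚ) * (CQ a * CQ b))]
    apply Finset.sum_congr rfl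
    intro k hk; rw [Finset.mem_range] at hk
    rw [Nat.cast_sub (by omega : k ≤ n)]
    ring
  have h2 : (2:ℚ) * (∑ k ∈ range (n+1), (k:ℚ) * (CQ k * CQ (n-k))) = (n:ℚ) * CQ (n+1) := by
    calc (2:ℚ) * (∑ k ∈ range (n+1), (k:ℚ) * (CQ k * CQ (n-k)))
        = (∑ k ∈ range (n+1), (k:ℚ) * (CQ k * CQ (n-k)))
          + ∑ k ∈ range (n+1), ((n:ℚ)-(k:ℚ)) * (CQ k * CQ (n-k)) := by rw [← hr]; ring
      _ = ∑ k ∈ range (n+1), (n:ℚ) * (CQ k * CQ (n-k)) := by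
          rw [← Finset.sum_add_distrib]
          exact Finset.sum_congr rfl fun k _ => by ring
      _ = (n:ℚ) * CQ (n+1) := by rw [← Finset.mul_sum, S0]
  linarith

lemma Mp0 (n : ℕ) : ∑ k ∈ range (n+1), CQ k * 4^(n-k) = (-1-2*(n:ℚ))*CQ n + 2*4^n := by
  induction n with
  | zero => norm_num [CQ_zero]
  | succ n ih =>
    rw [Finset.sum_range_succ]
    have hstep : ∑ k ∈ range (n+1), CQ k * 4^(n+1-k)
        = 4 * ∑ k ∈ range (n+1), CQ k * 4^(n-k) := by
      rw [Finset.mul_sum]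
      apply Finset.sum_congr rfl
      intro k hk; rw [Finset.mem_range] at hk
      rw [show n+1-k = (n-k)+1 by omega, pow_succ]
      ring
    rw [hstep, ih, Nat.sub_self, pow_zero, mul_one]
    push_cast
    linear_combination 2 * L1 n

lemma Mp1 (n : ℕ) : ∑ k ∈ range (n+1), (k:ℚ) * (CQ k * 4^(n-k))
    = (2+5*(n:ℚ)+2*(n:ℚ)^2) * CQ n - 2*4^n := by
  induction n with
  | zero => norm_num [CQ_zero]
  | succ n ih =>
    rw [Finset.sum_range_succ]
    have hstep : ∑ k ∈ range (n+1), (k:ℚ) * (CQ k * 4^(n+1-k))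
        = 4 * ∑ k ∈ range (n+1), (k:ℚ) * (CQ k * 4^(n-k)) := by
      rw [Finset.mul_sum]
      apply Finset.sum_congr rfl
      intro k hk; rw [Finset.mem_range] at hk
      rw [show n+1-k = (n-k)+1 by omega, pow_succ]
      ring
    rw [hstep, ih, Nat.sub_self, pow_zero, mul_one]
    push_cast
    linear_combination (-4-2*(n:ℚ)) * L1 n

lemma Mp2 (n : ℕ) : ∑ k ∈ range (n+1), (k:ℚ)^2 * (CQ k * 4^(n-k))
    = (-2-(14/3)*(n:ℚ)-(n:ℚ)^2+(2/3)*(n:ℚ)^3) * CQ n + 2*4^n := by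
  induction n with
  | zero => norm_num [CQ_zero]
  | succ n ih =>
    rw [Finset.sum_range_succ]
    have hstep : ∑ k ∈ range (n+1), (k:ℚ)^2 * (CQ k * 4^(n+1-k))
        = 4 * ∑ k ∈ range (n+1), (k:ℚ)^2 * (CQ k * 4^(n-k)) := by
      rw [Finset.mul_sum]
      apply Finset.sum_congr rfl
      intro k hk; rw [Finset.mem_range] at hk
      rw [show n+1-k = (n-k)+1 by omega, pow_succ]
      ring
    rw [hstep, ih, Nat.sub_self, pow_zero, mul_one]
    push_cast
    linear_combination (4+(4/3)*(n:ℚ)-(2/3)*(n:ℚ)^2) * L1 n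

lemma Mp3 (n : ℕ) : ∑ k ∈ range (n+1), (k:ℚ)^3 * (CQ k * 4^(n-k))
    = (2+(24/5)*(n:ℚ)+(8/5)*(n:ℚ)^2+(1/5)*(n:ℚ)^3+(2/5)*(n:ℚ)^4) * CQ n - 2*4^n := by
  induction n with
  | zero => norm_num [CQ_zero]
  | succ n ih =>
    rw [Finset.sum_range_succ]
    have hstep : ∑ k ∈ range (n+1), (k:ℚ)^3 * (CQ k * 4^(n+1-k))
        = 4 * ∑ k ∈ range (n+1), (k:ℚ)^3 * (CQ k * 4^(n-k)) := by
      rw [Finset.mul_sum]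
      apply Finset.sum_congr rfl
      intro k hk; rw [Finset.mem_range] at hk
      rw [show n+1-k = (n-k)+1 by omega, pow_succ]
      ring
    rw [hstep, ih, Nat.sub_self, pow_zero, mul_one]
    push_cast
    linear_combination (-4-(8/5)*(n:ℚ)-(2/5)*(n:ℚ)^3) * L1 n

lemma Hp0 (n : ℕ) : ∑ k ∈ range (n+1), (4:ℚ)^k * CQ (n-k) = (-1-2*(n:ℚ))*CQ n + 2*4^n := by
  rw [reflect_sum n (fun a b => (4:ℚ)^a * CQ b), ← Mp0 n]
  exact Finset.sum_congr rfl fun k _ => by ring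

lemma Hp1 (n : ℕ) : ∑ k ∈ range (n+1), (k:ℚ) * ((4:ℚ)^k * CQ (n-k))
    = (-2-6*(n:ℚ)-4*(n:ℚ)^2)*CQ n + (2+2*(n:ℚ))*4^n := by
  induction n with
  | zero => norm_num [CQ_zero]
  | succ n ih =>
    rw [Finset.sum_range_succ' (fun k => (k:ℚ) * ((4:ℚ)^k * CQ (n+1-k)))]
    have hstep : ∀ i ∈ range (n+1), ((i+1:ℕ):ℚ) * ((4:ℚ)^(i+1) * CQ (n+1-(i+1)))
        = 4*((i:ℚ) * ((4:ℚ)^i * CQ (n-i))) + 4*((4:ℚ)^i * CQ (n-i)) := by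
      intro i hi
      rw [Nat.succ_sub_succ, pow_succ]
      push_cast
      ring
    rw [Finset.sum_congr rfl hstep, Finset.sum_add_distrib, ← Finset.mul_sum, ← Finset.mul_sum,
      ih, Hp0 n]
    push_cast
    linear_combination (6+4*(n:ℚ)) * L1 n

lemma Hp2 (n : ℕ) : ∑ k ∈ range (n+1), (k:ℚ)^2 * ((4:ℚ)^k * CQ (n-k))
    = (-2-(26/3)*(n:ℚ)-12*(n:ℚ)^2-(16/3)*(n:ℚ)^3)*CQ n + (2+4*(n:ℚ)+2*(n:ℚ)^2)*4^n := by
  induction n with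
  | zero => norm_num [CQ_zero]
  | succ n ih =>
    rw [Finset.sum_range_succ' (fun k => (k:ℚ)^2 * ((4:ℚ)^k * CQ (n+1-k)))]
    have hstep : ∀ i ∈ range (n+1), ((i+1:ℕ):ℚ)^2 * ((4:ℚ)^(i+1) * CQ (n+1-(i+1)))
        = 4*((i:ℚ)^2 * ((4:ℚ)^i * CQ (n-i))) + 8*((i:ℚ) * ((4:ℚ)^i * CQ (n-i)))
          + 4*((4:ℚ)^i * CQ (n-i)) := by
      intro i hi
      rw [Nat.succ_sub_succ, pow_succ]
      push_cast
      ring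
    rw [Finset.sum_congr rfl hstep, Finset.sum_add_distrib, Finset.sum_add_distrib,
      ← Finset.mul_sum, ← Finset.mul_sum, ← Finset.mul_sum, ih, Hp1 n, Hp0 n]
    push_cast
    linear_combination (14+(52/3)*(n:ℚ)+(16/3)*(n:ℚ)^2) * L1 n

lemma Hp3 (n : ℕ) : ∑ k ∈ range (n+1), (k:ℚ)^3 * ((4:ℚ)^k * CQ (n-k))
    = (-2-(54/5)*(n:ℚ)-(108/5)*(n:ℚ)^2-(96/5)*(n:ℚ)^3-(32/5)*(n:ℚ)^4)*CQ n
      + (2+6*(n:ℚ)+6*(n:ℚ)^2+2*(n:ℚ)^3)*4^n := by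
  induction n with
  | zero => norm_num [CQ_zero]
  | succ n ih =>
    rw [Finset.sum_range_succ' (fun k => (k:ℚ)^3 * ((4:ℚ)^k * CQ (n+1-k)))]
    have hstep : ∀ i ∈ range (n+1), ((i+1:ℕ):ℚ)^3 * ((4:ℚ)^(i+1) * CQ (n+1-(i+1)))
        = 4*((i:ℚ)^3 * ((4:ℚ)^i * CQ (n-i))) + 12*((i:ℚ)^2 * ((4:ℚ)^i * CQ (n-i)))
          + 12*((i:ℚ) * ((4:ℚ)^i * CQ (n-i))) + 4*((4:ℚ)^i * CQ (n-i)) := by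
      intro i hi
      rw [Nat.succ_sub_succ, pow_succ]
      push_cast
      ring
    rw [Finset.sum_congr rfl hstep, Finset.sum_add_distrib, Finset.sum_add_distrib,
      Finset.sum_add_distrib, ← Finset.mul_sum, ← Finset.mul_sum, ← Finset.mul_sum,
      ← Finset.mul_sum, ih, Hp2 n, Hp1 n, Hp0 n]
    push_cast
    linear_combination (30+(268/5)*(n:ℚ)+32*(n:ℚ)^2+(32/5)*(n:ℚ)^3) * L1 n

lemma Lb (k : ℕ) : bQ (k+1) = 2 * ∑ j ∈ range (k+1), CQ j * bQ (k-j) := by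
  have hpt : ∀ j ∈ range (k+1), CQ j * bQ (k-j)
      = ((k:ℚ)+1)*(CQ j * CQ (k-j)) - (j:ℚ)*(CQ j * CQ (k-j)) := by
    intro j hj; rw [Finset.mem_range] at hj
    unfold bQ
    rw [Nat.cast_sub (by omega : j ≤ k)]
    ring
  rw [Finset.sum_congr rfl hpt, Finset.sum_sub_distrib, ← Finset.mul_sum, S0, S1]
  unfold bQ
  push_cast
  ring

lemma W (n : ℕ) : ∑ k ∈ range (n+1), bQ k * bQ (n-k) = 4^n := by
  induction n using Nat.strong_induction_on with
  | _ n ih =>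
    match n, ih with
    | 0, _ => norm_num [bQ, CQ_zero]
    | (m+1), ih =>
      rw [Finset.sum_range_succ' (fun k => bQ k * bQ (m+1-k))]
      have h1 : ∀ i ∈ range (m+1), bQ (i+1) * bQ (m+1-(i+1))
          = ∑ j ∈ range (i+1), (2*CQ j) * (bQ (i-j) * bQ (m-i)) := by
        intro i hi
        rw [Nat.succ_sub_succ, Lb i, Finset.mul_sum, Finset.sum_mul]
        exact Finset.sum_congr rfl fun j _ => by ring
      rw [Finset.sum_congr rfl h1,
        tri_swap (m+1) (fun j i => (2*CQ j) * (bQ (i-j) * bQ (m-i)))]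
      have h2 : ∀ j ∈ range (m+1), ∑ t ∈ range (m+1-j), (2*CQ j) * (bQ ((j+t)-j) * bQ (m-(j+t)))
          = (2*CQ j) * 4^(m-j) := by
        intro j hj; rw [Finset.mem_range] at hj
        have e3 : m+1-j = (m-j)+1 := by omega
        calc ∑ t ∈ range (m+1-j), (2*CQ j) * (bQ ((j+t)-j) * bQ (m-(j+t)))
            = ∑ t ∈ range ((m-j)+1), (2*CQ j) * (bQ t * bQ ((m-j)-t)) := by
              rw [e3]
              apply Finset.sum_congr rfl
              intro t _
              rw [show (j+t)-j = t by omega, show m-(j+t) = (m-j)-t by omega]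
          _ = (2*CQ j) * ∑ t ∈ range ((m-j)+1), bQ t * bQ ((m-j)-t) := by
              rw [Finset.mul_sum]
          _ = (2*CQ j) * 4^(m-j) := by rw [ih (m-j) (by omega)]
      rw [Finset.sum_congr rfl h2]
      have h3 : ∑ j ∈ range (m+1), (2*CQ j) * 4^(m-j)
          = 2 * ∑ j ∈ range (m+1), CQ j * 4^(m-j) := by
        rw [Finset.mul_sum]
        exact Finset.sum_congr rfl fun j _ => by ring
      rw [h3, Mp0 m]
      unfold bQ
      rw [CQ_zero]
      push_cast
      linear_combination L1 m

lemma S2 (n : ℕ) : ∑ k ∈ range (n+1), (k:ℚ)^2 * (CQ k * CQ (n-k))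
    = (1+(n:ℚ)+(n:ℚ)^2/2)*CQ (n+1) - 4^n := by
  have hW := W n
  have hpt : ∀ k ∈ range (n+1), bQ k * bQ (n-k)
      = ((n:ℚ)+1)*(CQ k * CQ (n-k)) + (n:ℚ)*((k:ℚ)*(CQ k * CQ (n-k)))
        - (k:ℚ)^2*(CQ k * CQ (n-k)) := by
    intro k hk; rw [Finset.mem_range] at hk
    unfold bQ
    rw [Nat.cast_sub (by omega : k ≤ n)]
    ring
  rw [Finset.sum_congr rfl hpt, Finset.sum_sub_distrib, Finset.sum_add_distrib,
    ← Finset.mul_sum, ← Finset.mul_sum, S0, S1] at hW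
  linarith

lemma S3 (n : ℕ) : ∑ k ∈ range (n+1), (k:ℚ)^3 * (CQ k * CQ (n-k))
    = ((3/2)*(n:ℚ)+(3/2)*(n:ℚ)^2+(n:ℚ)^3/2)*CQ (n+1) - (3/2)*(n:ℚ)*4^n := by
  have hr : ∑ k ∈ range (n+1), (k:ℚ)^3 * (CQ k * CQ (n-k))
      = ∑ k ∈ range (n+1), ((n:ℚ)-(k:ℚ))^3 * (CQ k * CQ (n-k)) := by
    rw [reflect_sum n (fun a b => (a:ℚ)^3 * (CQ a * CQ b))]
    apply Finset.sum_congr rfl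
    intro k hk; rw [Finset.mem_range] at hk
    rw [Nat.cast_sub (by omega : k ≤ n)]
    ring
  have h2 : (2:ℚ) * (∑ k ∈ range (n+1), (k:ℚ)^3 * (CQ k * CQ (n-k)))
      = (n:ℚ)^3 * CQ (n+1) - 3*(n:ℚ)^2*((n:ℚ)/2 * CQ (n+1))
        + 3*(n:ℚ)*((1+(n:ℚ)+(n:ℚ)^2/2)*CQ (n+1) - 4^n) := by
    calc (2:ℚ) * (∑ k ∈ range (n+1), (k:ℚ)^3 * (CQ k * CQ (n-k)))
        = (∑ k ∈ range (n+1), (k:ℚ)^3 * (CQ k * CQ (n-k)))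
          + ∑ k ∈ range (n+1), ((n:ℚ)-(k:ℚ))^3 * (CQ k * CQ (n-k)) := by rw [← hr]; ring
      _ = ∑ k ∈ range (n+1), ((n:ℚ)^3 * (CQ k * CQ (n-k))
            - 3*(n:ℚ)^2*((k:ℚ)*(CQ k * CQ (n-k))) + 3*(n:ℚ)*((k:ℚ)^2*(CQ k * CQ (n-k)))) := by
          rw [← Finset.sum_add_distrib]
          exact Finset.sum_congr rfl fun k _ => by ring
      _ = (n:ℚ)^3 * CQ (n+1) - 3*(n:ℚ)^2*((n:ℚ)/2 * CQ (n+1))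
          + 3*(n:ℚ)*((1+(n:ℚ)+(n:ℚ)^2/2)*CQ (n+1) - 4^n) := by
          rw [Finset.sum_add_distrib, Finset.sum_sub_distrib, ← Finset.mul_sum, ← Finset.mul_sum,
            ← Finset.mul_sum, S0, S1, S2]
  linarith

lemma P0 (n : ℕ) : ∑ k ∈ range (n+1), (1:ℚ) = (n:ℚ)+1 := by
  rw [Finset.sum_const, Finset.card_range]
  push_cast
  ring

lemma P1 (n : ℕ) : ∑ k ∈ range (n+1), (k:ℚ) = ((n:ℚ)^2+(n:ℚ))/2 := by
  induction n with
  | zero => simp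
  | succ n ih =>
    rw [Finset.sum_range_succ, ih]
    push_cast
    ring

variable {α β : Type*} [DecidableEq α] [DecidableEq β]

lemma single_pow1 (t : Finset β) (v : β → ℚ) (y : ℚ) :
    ∑ g ∈ t, (y + v g)^1
      = y*(∑ g ∈ t, v g^0) + (∑ g ∈ t, v g^1) := by
  induction t using Finset.induction_on with
  | empty => simp
  | insert _ _ ha => simp only [Finset.sum_insert ha]; rename_i IH; rw [IH]; ring

lemma single_pow2 (t : Finset β) (v : β → ℚ) (y : ℚ) :
    ∑ g ∈ t, (y + v g)^2
      = y^2*(∑ g ∈ t, v g^0) + 2*y*(∑ g ∈ t, v g^1) + (∑ g ∈ t, v g^2) := by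
  induction t using Finset.induction_on with
  | empty => simp
  | insert _ _ ha => simp only [Finset.sum_insert ha]; rename_i IH; rw [IH]; ring

lemma single_pow3 (t : Finset β) (v : β → ℚ) (y : ℚ) :
    ∑ g ∈ t, (y + v g)^3
      = y^3*(∑ g ∈ t, v g^0) + 3*y^2*(∑ g ∈ t, v g^1)
        + 3*y*(∑ g ∈ t, v g^2) + (∑ g ∈ t, v g^3) := by
  induction t using Finset.induction_on with
  | empty => simp
  | insert _ _ ha => simp only [Finset.sum_insert ha]; rename_i IH; rw [IH]; ring

lemma double_pow0 (s : Finset α) (t : Finset β) (u : α → ℚ) (v : β → ℚ) (c : ℚ) :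
    ∑ f ∈ s, ∑ g ∈ t, (u f + v g + c)^0
      = (∑ f ∈ s, u f^0) * (∑ g ∈ t, v g^0) := by
  rw [Finset.sum_mul_sum]
  apply Finset.sum_congr rfl; intro f _
  apply Finset.sum_congr rfl; intro g _
  ring

lemma double_pow1 (s : Finset α) (t : Finset β) (u : α → ℚ) (v : β → ℚ) (c : ℚ) :
    ∑ f ∈ s, ∑ g ∈ t, (u f + v g + c)^1
      = (∑ f ∈ s, u f^1) * (∑ g ∈ t, v g^0)
        + (∑ f ∈ s, u f^0) * (∑ g ∈ t, v g^1)
        + c*((∑ f ∈ s, u f^0) * (∑ g ∈ t, v g^0)) := by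
  induction s using Finset.induction_on with
  | empty => simp
  | insert _ _ ha =>
    rename_i a s IH
    simp only [Finset.sum_insert ha]
    have h : ∑ g ∈ t, (u a + v g + c)^1 = ∑ g ∈ t, ((u a + c) + v g)^1 :=
      Finset.sum_congr rfl fun g _ => by ring
    rw [h, single_pow1, IH]
    ring

lemma double_pow2 (s : Finset α) (t : Finset β) (u : α → ℚ) (v : β → ℚ) (c : ℚ) :
    ∑ f ∈ s, ∑ g ∈ t, (u f + v g + c)^2
      = (∑ f ∈ s, u f^2) * (∑ g ∈ t, v g^0)
        + 2*((∑ f ∈ s, u f^1) * (∑ g ∈ t, v g^1))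
        + 2*c*((∑ f ∈ s, u f^1) * (∑ g ∈ t, v g^0))
        + (∑ f ∈ s, u f^0) * (∑ g ∈ t, v g^2)
        + 2*c*((∑ f ∈ s, u f^0) * (∑ g ∈ t, v g^1))
        + c^2*((∑ f ∈ s, u f^0) * (∑ g ∈ t, v g^0)) := by
  induction s using Finset.induction_on with
  | empty => simp
  | insert _ _ ha =>
    rename_i a s IH
    simp only [Finset.sum_insert ha]
    have h : ∑ g ∈ t, (u a + v g + c)^2 = ∑ g ∈ t, ((u a + c) + v g)^2 :=
      Finset.sum_congr rfl fun g _ => by ring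
    rw [h, single_pow2, IH]
    ring

lemma double_pow3 (s : Finset α) (t : Finset β) (u : α → ℚ) (v : β → ℚ) (c : ℚ) :
    ∑ f ∈ s, ∑ g ∈ t, (u f + v g + c)^3
      = (∑ f ∈ s, u f^3) * (∑ g ∈ t, v g^0)
        + 3*((∑ f ∈ s, u f^2) * (∑ g ∈ t, v g^1))
        + 3*c*((∑ f ∈ s, u f^2) * (∑ g ∈ t, v g^0))
        + 3*((∑ f ∈ s, u f^1) * (∑ g ∈ t, v g^2))
        + 6*c*((∑ f ∈ s, u f^1) * (∑ g ∈ t, v g^1))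
        + 3*c^2*((∑ f ∈ s, u f^1) * (∑ g ∈ t, v g^0))
        + (∑ f ∈ s, u f^0) * (∑ g ∈ t, v g^3)
        + 3*c*((∑ f ∈ s, u f^0) * (∑ g ∈ t, v g^2))
        + 3*c^2*((∑ f ∈ s, u f^0) * (∑ g ∈ t, v g^1))
        + c^3*((∑ f ∈ s, u f^0) * (∑ g ∈ t, v g^0)) := by
  induction s using Finset.induction_on with
  | empty => simp
  | insert _ _ ha =>
    rename_i a s IH
    simp only [Finset.sum_insert ha]
    have h : ∑ g ∈ t, (u a + v g + c)^3 = ∑ g ∈ t, ((u a + c) + v g)^3 :=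
      Finset.sum_congr rfl fun g _ => by ring
    rw [h, single_pow3, IH]
    ring


/-! ### closed forms -/

noncomputable def F0 (n : ℕ) : ℚ := CQ n
noncomputable def F1 (n : ℕ) : ℚ := 4^n - (2*(n:ℚ)+1) * CQ n
noncomputable def F2 (n : ℕ) : ℚ :=
  (2 + (26/3)*(n:ℚ) + 11*(n:ℚ)^2 + (10/3)*(n:ℚ)^3) * CQ n + (-2 - 4*(n:ℚ)) * 4^n
noncomputable def F3 (n : ℕ) : ℚ :=
  (-4 - 26*(n:ℚ) - 61*(n:ℚ)^2 - 60*(n:ℚ)^3 - 20*(n:ℚ)^4) * CQ n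
    + (4 + (33/2)*(n:ℚ) + (75/4)*(n:ℚ)^2 + (15/4)*(n:ℚ)^3) * 4^n

lemma dps_zero (r : ℕ) : dyckPowerSum 0 r = (0:ℚ)^r := by
  unfold dyckPowerSum
  have h1 : ∀ f : Fin (2*0) → Bool, IsDyck f := by
    intro f
    constructor
    · unfold dheight
      apply Finset.sum_eq_zero
      intro i _
      exact i.elim0
    · intro k hk
      rw [Finset.mem_range] at hk
      omega
  rw [Finset.filter_true_of_mem (fun f _ => h1 f)]
  have h2 : ∀ f : Fin (2*0) → Bool, ((darea f : ℤ):ℚ)^r = (0:ℚ)^r := by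
    intro f
    have : darea f = 0 := by simp [darea]
    rw [this]
    norm_num
  rw [Finset.sum_congr rfl (fun f _ => h2 f), Finset.sum_const, Finset.card_univ]
  have : Fintype.card (Fin (2*0) → Bool) = 1 := by simp
  rw [this, one_smul]

lemma main_all (n : ℕ) :
    dyckPowerSum n 0 = F0 n ∧ dyckPowerSum n 1 = F1 n ∧
    dyckPowerSum n 2 = F2 n ∧ dyckPowerSum n 3 = F3 n := by
  induction n using Nat.strong_induction_on with
  | _ n ih =>
    match n, ih with
    | 0, _ =>
      refine ⟨?_, ?_, ?_, ?_⟩ <;>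
        · rw [dps_zero]
          norm_num [F0, F1, F2, F3, CQ_zero]
    | (m+1), ih =>
      have ih0 : ∀ k, k ≤ m → dyckPowerSum k 0 = F0 k := fun k hk => (ih k (by omega)).1
      have ih1 : ∀ k, k ≤ m → dyckPowerSum k 1 = F1 k := fun k hk => (ih k (by omega)).2.1
      have ih2 : ∀ k, k ≤ m → dyckPowerSum k 2 = F2 k := fun k hk => (ih k (by omega)).2.2.1
      have ih3 : ∀ k, k ≤ m → dyckPowerSum k 3 = F3 k := fun k hk => (ih k (by omega)).2.2.2
      refine ⟨?_, ?_, ?_, ?_⟩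
      · -- r = 0
        have e1 : dyckPowerSum (m+1) 0 = ∑ k ∈ Finset.range (m+1),
            ∑ f ∈ Finset.univ.filter (fun f : Fin (2*k) → Bool => IsDyck f),
              ∑ g ∈ Finset.univ.filter (fun g : Fin (2*(m-k)) → Bool => IsDyck g),
                (((darea f + darea g + (2*(k:ℤ)+1)) : ℤ):ℚ)^0 :=
          master m (fun z => (z:ℚ)^0)
        rw [e1]
        have e2 : ∀ k ∈ Finset.range (m+1),
            (∑ f ∈ Finset.univ.filter (fun f : Fin (2*k) → Bool => IsDyck f),
              ∑ g ∈ Finset.univ.filter (fun g : Fin (2*(m-k)) → Bool => IsDyck g),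
                (((darea f + darea g + (2*(k:ℤ)+1)) : ℤ):ℚ)^0)
            = dyckPowerSum k 0 * dyckPowerSum (m-k) 0 := by
          intro k _
          have hc : ∀ f : Fin (2*k) → Bool, ∀ g : Fin (2*(m-k)) → Bool,
              (((darea f + darea g + (2*(k:ℤ)+1)) : ℤ):ℚ)^0
                = (((darea f : ℤ):ℚ) + ((darea g : ℤ):ℚ) + (2*(k:ℚ)+1))^0 := by
            intro f g; push_cast; ring
          rw [Finset.sum_congr rfl (fun f _ => Finset.sum_congr rfl (fun g _ => hc f g))]
          exact double_pow0 _ _ _ _ _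
        rw [Finset.sum_congr rfl e2]
        have e3 : ∀ k ∈ Finset.range (m+1),
            dyckPowerSum k 0 * dyckPowerSum (m-k) 0 = CQ k * CQ (m-k) := by
          intro k hk
          rw [Finset.mem_range] at hk
          rw [ih0 k (by omega), ih0 (m-k) (by omega)]
          rfl
        rw [Finset.sum_congr rfl e3, S0]
        rfl
      · -- r = 1
        have e1 : dyckPowerSum (m+1) 1 = ∑ k ∈ Finset.range (m+1),
            ∑ f ∈ Finset.univ.filter (fun f : Fin (2*k) → Bool => IsDyck f),
              ∑ g ∈ Finset.univ.filter (fun g : Fin (2*(m-k)) → Bool => IsDyck g),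
                (((darea f + darea g + (2*(k:ℤ)+1)) : ℤ):ℚ)^1 :=
          master m (fun z => (z:ℚ)^1)
        rw [e1]
        have e2 : ∀ k ∈ Finset.range (m+1),
            (∑ f ∈ Finset.univ.filter (fun f : Fin (2*k) → Bool => IsDyck f),
              ∑ g ∈ Finset.univ.filter (fun g : Fin (2*(m-k)) → Bool => IsDyck g),
                (((darea f + darea g + (2*(k:ℤ)+1)) : ℤ):ℚ)^1)
            = dyckPowerSum k 1 * dyckPowerSum (m-k) 0
              + dyckPowerSum k 0 * dyckPowerSum (m-k) 1
              + (2*(k:ℚ)+1)*(dyckPowerSum k 0 * dyckPowerSum (m-k) 0) := by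
          intro k _
          have hc : ∀ f : Fin (2*k) → Bool, ∀ g : Fin (2*(m-k)) → Bool,
              (((darea f + darea g + (2*(k:ℤ)+1)) : ℤ):ℚ)^1
                = (((darea f : ℤ):ℚ) + ((darea g : ℤ):ℚ) + (2*(k:ℚ)+1))^1 := by
            intro f g; push_cast; ring
          rw [Finset.sum_congr rfl (fun f _ => Finset.sum_congr rfl (fun g _ => hc f g))]
          exact double_pow1 _ _ _ _ _
        rw [Finset.sum_congr rfl e2]
        have e3 : ∀ k ∈ Finset.range (m+1),
            dyckPowerSum k 1 * dyckPowerSum (m-k) 0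
              + dyckPowerSum k 0 * dyckPowerSum (m-k) 1
              + (2*(k:ℚ)+1)*(dyckPowerSum k 0 * dyckPowerSum (m-k) 0)
            = (-1-2*(m:ℚ)) * (CQ k * CQ (m-k))
              + 2 * ((k:ℚ) * (CQ k * CQ (m-k)))
              + ((4:ℚ)^k * CQ (m-k))
              + (CQ k * (4:ℚ)^(m-k)) := by
          intro k hk
          rw [Finset.mem_range] at hk
          rw [ih1 k (by omega), ih0 k (by omega), ih1 (m-k) (by omega), ih0 (m-k) (by omega)]
          unfold F0 F1
          rw [Nat.cast_sub (by omega : k ≤ m)]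
          ring
        rw [Finset.sum_congr rfl e3]
        simp only [Finset.sum_add_distrib]
        simp only [← Finset.mul_sum]
        rw [S0, S1, Hp0, Mp0]
        unfold F1
        push_cast
        apply mul_left_cancel₀ (show (2*(2*(m:ℚ)+1)) ≠ 0 by positivity)
        linear_combination (2+4*(m:ℚ)) * L1 m
      · -- r = 2
        have e1 : dyckPowerSum (m+1) 2 = ∑ k ∈ Finset.range (m+1),
            ∑ f ∈ Finset.univ.filter (fun f : Fin (2*k) → Bool => IsDyck f),
              ∑ g ∈ Finset.univ.filter (fun g : Fin (2*(m-k)) → Bool => IsDyck g),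
                (((darea f + darea g + (2*(k:ℤ)+1)) : ℤ):ℚ)^2 :=
          master m (fun z => (z:ℚ)^2)
        rw [e1]
        have e2 : ∀ k ∈ Finset.range (m+1),
            (∑ f ∈ Finset.univ.filter (fun f : Fin (2*k) → Bool => IsDyck f),
              ∑ g ∈ Finset.univ.filter (fun g : Fin (2*(m-k)) → Bool => IsDyck g),
                (((darea f + darea g + (2*(k:ℤ)+1)) : ℤ):ℚ)^2)
            = dyckPowerSum k 2 * dyckPowerSum (m-k) 0
              + 2*(dyckPowerSum k 1 * dyckPowerSum (m-k) 1)
              + 2*(2*(k:ℚ)+1)*(dyckPowerSum k 1 * dyckPowerSum (m-k) 0)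
              + dyckPowerSum k 0 * dyckPowerSum (m-k) 2
              + 2*(2*(k:ℚ)+1)*(dyckPowerSum k 0 * dyckPowerSum (m-k) 1)
              + (2*(k:ℚ)+1)^2*(dyckPowerSum k 0 * dyckPowerSum (m-k) 0) := by
          intro k _
          have hc : ∀ f : Fin (2*k) → Bool, ∀ g : Fin (2*(m-k)) → Bool,
              (((darea f + darea g + (2*(k:ℤ)+1)) : ℤ):ℚ)^2
                = (((darea f : ℤ):ℚ) + ((darea g : ℤ):ℚ) + (2*(k:ℚ)+1))^2 := by
            intro f g; push_cast; ring
          rw [Finset.sum_congr rfl (fun f _ => Finset.sum_congr rfl (fun g _ => hc f g))]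
          exact double_pow2 _ _ _ _ _
        rw [Finset.sum_congr rfl e2]
        have e3 : ∀ k ∈ Finset.range (m+1),
            dyckPowerSum k 2 * dyckPowerSum (m-k) 0
              + 2*(dyckPowerSum k 1 * dyckPowerSum (m-k) 1)
              + 2*(2*(k:ℚ)+1)*(dyckPowerSum k 1 * dyckPowerSum (m-k) 0)
              + dyckPowerSum k 0 * dyckPowerSum (m-k) 2
              + 2*(2*(k:ℚ)+1)*(dyckPowerSum k 0 * dyckPowerSum (m-k) 1)
              + (2*(k:ℚ)+1)^2*(dyckPowerSum k 0 * dyckPowerSum (m-k) 0)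
            = (3 + (26/3)*(m:ℚ) + 11*(m:ℚ)^2 + (10/3)*(m:ℚ)^3) * (CQ k * CQ (m-k))
              + (-4 - 22*(m:ℚ) - 10*(m:ℚ)^2) * ((k:ℚ) * (CQ k * CQ (m-k)))
              + (18 + 10*(m:ℚ)) * ((k:ℚ)^2 * (CQ k * CQ (m-k)))
              + (-2 - 4*(m:ℚ)) * ((4:ℚ)^k * CQ (m-k))
              + 4 * ((k:ℚ) * ((4:ℚ)^k * CQ (m-k)))
              + (-2 - 4*(m:ℚ)) * (CQ k * (4:ℚ)^(m-k))
              + 4 * ((k:ℚ) * (CQ k * (4:ℚ)^(m-k)))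
              + (2 * (4:ℚ)^m) * (1:ℚ) := by
          intro k hk
          rw [Finset.mem_range] at hk
          rw [ih2 k (by omega), ih1 k (by omega), ih0 k (by omega),
            ih2 (m-k) (by omega), ih1 (m-k) (by omega), ih0 (m-k) (by omega)]
          unfold F0 F1 F2
          rw [Nat.cast_sub (by omega : k ≤ m)]
          have hxy : (4:ℚ)^k * 4^(m-k) = 4^m := by
            rw [← pow_add]
            congr 1
            omega
          linear_combination (2:ℚ) * hxy
        rw [Finset.sum_congr rfl e3]
        simp only [Finset.sum_add_distrib]
        simp only [← Finset.mul_sum]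
        rw [S0, S1, S2, Hp0, Hp1, Mp0, Mp1, P0]
        unfold F2
        push_cast
        apply mul_left_cancel₀ (show (2*(2*(m:ℚ)+1)) ≠ 0 by positivity)
        linear_combination (-4 - 12*(m:ℚ) - 8*(m:ℚ)^2) * L1 m
      · -- r = 3
        have e1 : dyckPowerSum (m+1) 3 = ∑ k ∈ Finset.range (m+1),
            ∑ f ∈ Finset.univ.filter (fun f : Fin (2*k) → Bool => IsDyck f),
              ∑ g ∈ Finset.univ.filter (fun g : Fin (2*(m-k)) → Bool => IsDyck g),
                (((darea f + darea g + (2*(k:ℤ)+1)) : ℤ):ℚ)^3 :=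
          master m (fun z => (z:ℚ)^3)
        rw [e1]
        have e2 : ∀ k ∈ Finset.range (m+1),
            (∑ f ∈ Finset.univ.filter (fun f : Fin (2*k) → Bool => IsDyck f),
              ∑ g ∈ Finset.univ.filter (fun g : Fin (2*(m-k)) → Bool => IsDyck g),
                (((darea f + darea g + (2*(k:ℤ)+1)) : ℤ):ℚ)^3)
            = dyckPowerSum k 3 * dyckPowerSum (m-k) 0
              + 3*(dyckPowerSum k 2 * dyckPowerSum (m-k) 1)
              + 3*(2*(k:ℚ)+1)*(dyckPowerSum k 2 * dyckPowerSum (m-k) 0)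
              + 3*(dyckPowerSum k 1 * dyckPowerSum (m-k) 2)
              + 6*(2*(k:ℚ)+1)*(dyckPowerSum k 1 * dyckPowerSum (m-k) 1)
              + 3*(2*(k:ℚ)+1)^2*(dyckPowerSum k 1 * dyckPowerSum (m-k) 0)
              + dyckPowerSum k 0 * dyckPowerSum (m-k) 3
              + 3*(2*(k:ℚ)+1)*(dyckPowerSum k 0 * dyckPowerSum (m-k) 2)
              + 3*(2*(k:ℚ)+1)^2*(dyckPowerSum k 0 * dyckPowerSum (m-k) 1)
              + (2*(k:ℚ)+1)^3*(dyckPowerSum k 0 * dyckPowerSum (m-k) 0) := by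
          intro k _
          have hc : ∀ f : Fin (2*k) → Bool, ∀ g : Fin (2*(m-k)) → Bool,
              (((darea f + darea g + (2*(k:ℤ)+1)) : ℤ):ℚ)^3
                = (((darea f : ℤ):ℚ) + ((darea g : ℤ):ℚ) + (2*(k:ℚ)+1))^3 := by
            intro f g; push_cast; ring
          rw [Finset.sum_congr rfl (fun f _ => Finset.sum_congr rfl (fun g _ => hc f g))]
          exact double_pow3 _ _ _ _ _
        rw [Finset.sum_congr rfl e2]
        have e3 : ∀ k ∈ Finset.range (m+1),
            dyckPowerSum k 3 * dyckPowerSum (m-k) 0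
              + 3*(dyckPowerSum k 2 * dyckPowerSum (m-k) 1)
              + 3*(2*(k:ℚ)+1)*(dyckPowerSum k 2 * dyckPowerSum (m-k) 0)
              + 3*(dyckPowerSum k 1 * dyckPowerSum (m-k) 2)
              + 6*(2*(k:ℚ)+1)*(dyckPowerSum k 1 * dyckPowerSum (m-k) 1)
              + 3*(2*(k:ℚ)+1)^2*(dyckPowerSum k 1 * dyckPowerSum (m-k) 0)
              + dyckPowerSum k 0 * dyckPowerSum (m-k) 3
              + 3*(2*(k:ℚ)+1)*(dyckPowerSum k 0 * dyckPowerSum (m-k) 2)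
              + 3*(2*(k:ℚ)+1)^2*(dyckPowerSum k 0 * dyckPowerSum (m-k) 1)
              + (2*(k:ℚ)+1)^3*(dyckPowerSum k 0 * dyckPowerSum (m-k) 0)
            = (-7 - 32*(m:ℚ) - 61*(m:ℚ)^2 - 60*(m:ℚ)^3 - 20*(m:ℚ)^4) * (CQ k * CQ (m-k))
              + (18 + 94*(m:ℚ) + 180*(m:ℚ)^2 + 80*(m:ℚ)^3) * ((k:ℚ) * (CQ k * CQ (m-k)))
              + (-54 - 222*(m:ℚ) - 120*(m:ℚ)^2) * ((k:ℚ)^2 * (CQ k * CQ (m-k)))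
              + (92 + 60*(m:ℚ)) * ((k:ℚ)^3 * (CQ k * CQ (m-k)))
              + (7 + 26*(m:ℚ) + 33*(m:ℚ)^2 + 10*(m:ℚ)^3) * ((4:ℚ)^k * CQ (m-k))
              + (-43/2 - 66*(m:ℚ) - 30*(m:ℚ)^2) * ((k:ℚ) * ((4:ℚ)^k * CQ (m-k)))
              + (159/4 + 30*(m:ℚ)) * ((k:ℚ)^2 * ((4:ℚ)^k * CQ (m-k)))
              + (-25/4) * ((k:ℚ)^3 * ((4:ℚ)^k * CQ (m-k)))
              + (7 + (33/2)*(m:ℚ) + (75/4)*(m:ℚ)^2 + (15/4)*(m:ℚ)^3) * (CQ k * (4:ℚ)^(m-k))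
              + (-5/2 - (75/2)*(m:ℚ) - (45/4)*(m:ℚ)^2) * ((k:ℚ) * (CQ k * (4:ℚ)^(m-k)))
              + (159/4 + (45/4)*(m:ℚ)) * ((k:ℚ)^2 * (CQ k * (4:ℚ)^(m-k)))
              + (25/4) * ((k:ℚ)^3 * (CQ k * (4:ℚ)^(m-k)))
              + ((-6 - 12*(m:ℚ)) * (4:ℚ)^m) * (1:ℚ)
              + (12 * (4:ℚ)^m) * (k:ℚ) := by
          intro k hk
          rw [Finset.mem_range] at hk
          rw [ih3 k (by omega), ih2 k (by omega), ih1 k (by omega), ih0 k (by omega),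
            ih3 (m-k) (by omega), ih2 (m-k) (by omega), ih1 (m-k) (by omega),
            ih0 (m-k) (by omega)]
          unfold F0 F1 F2 F3
          rw [Nat.cast_sub (by omega : k ≤ m)]
          have hxy : (4:ℚ)^k * 4^(m-k) = 4^m := by
            rw [← pow_add]
            congr 1
            omega
          linear_combination ((-6:ℚ) - 12*(m:ℚ) + 12*(k:ℚ)) * hxy
        rw [Finset.sum_congr rfl e3]
        simp only [Finset.sum_add_distrib]
        simp only [← Finset.mul_sum]
        rw [S0, S1, S2, S3, Hp0, Hp1, Hp2, Hp3, Mp0, Mp1, Mp2, Mp3, P0, P1]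
        unfold F3
        push_cast
        apply mul_left_cancel₀ (show (2*(2*(m:ℚ)+1)) ≠ 0 by positivity)
        linear_combination (110 + 412*(m:ℚ) + 494*(m:ℚ)^2 + 240*(m:ℚ)^3 + 40*(m:ℚ)^4) * L1 m


theorem dyck_area_cube_sum (n : ℕ) :
    dyckPowerSum n 3 =
      (-20*(n:ℚ)^4 - 60*(n:ℚ)^3 - 61*(n:ℚ)^2 - 26*(n:ℚ) - 4) * cat n
        + ((15/4)*(n:ℚ)^3 + (75/4)*(n:ℚ)^2 + (33/2)*(n:ℚ) + 4) * 4^n := by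
  have h := (main_all n).2.2.2
  rw [h, cat_eq_CQ]
  unfold F3
  ring
end
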